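/- Let r ≥ 2 and u_n^{(r)} = m_n^{(r)} + 1 where (m_n^{(r)}) satisfies m_0^{(r)} = 0, m_{2n}^{(r)} = 2^r m_n^{(r)}, m_{2n+1}^{(r)} = 2^r m_n^{(r)} + 1. Then liminf_{n→∞} u_n^{(r)}/n^r = 1/(2^r - 1) and limsup_{n→∞} u_n^{(r)}/n^r = 1. -/

import Mathlib

open Filter Topology Finset

set_option linter.unusedSectionVars false

private lemma pow_succ_mono' (r : ℕ) {x y : ℕ} (h : x ≤ y) :
    (x + 1) ^ r + y ^ r ≤ (y + 1) ^ r + x ^ r := by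
  have hx : (x + 1) ^ r = ∑ i ∈ Finset.range (r + 1), x ^ i * r.choose i := by
    rw [add_pow]; simp
  have hy : (y + 1) ^ r = ∑ i ∈ Finset.range (r + 1), y ^ i * r.choose i := by
    rw [add_pow]; simp
  rw [hx, hy, Finset.sum_range_succ, Finset.sum_range_succ, Nat.choose_self, mul_one, mul_one]
  have hAB : ∑ i ∈ Finset.range r, x ^ i * r.choose i ≤ ∑ i ∈ Finset.range r, y ^ i * r.choose i :=
    Finset.sum_le_sum fun i _ => Nat.mul_le_mul_right _ (Nat.pow_le_pow_left h i)
  omega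

private lemma pow_shift_mono (r : ℕ) {a b : ℕ} (h : a ≤ b) (c : ℕ) :
    (a + c) ^ r + b ^ r ≤ (b + c) ^ r + a ^ r := by
  induction c with
  | zero => simp [Nat.add_comm]
  | succ c ih =>
    have h2 := pow_succ_mono' r (x := a + c) (y := b + c) (by omega)
    have e1 : a + (c + 1) = a + c + 1 := by omega
    have e2 : b + (c + 1) = b + c + 1 := by omega
    rw [e1, e2]
    omega

private lemma pow_split_le (r : ℕ) {s t : ℕ} (h : s ≤ t) :
    (t + s) ^ r ≤ (2 ^ r - 1) * t ^ r + s ^ r := by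
  have h1 := pow_shift_mono r h t
  have h2 : (t + t) ^ r = 2 ^ r * t ^ r := by rw [← two_mul, mul_pow]
  have h3 : (2 ^ r - 1) * t ^ r + t ^ r = 2 ^ r * t ^ r := by
    have h4 : 1 ≤ 2 ^ r := Nat.one_le_two_pow
    cases' Nat.exists_eq_add_of_le h4 with d hd
    have e : 1 + d - 1 = d := by omega
    rw [hd, e]; ring
  have e : t + s = s + t := by omega
  rw [e]
  omega


section mlemmas

variable {r : ℕ} {m : ℕ → ℕ} (hm0 : m 0 = 0)
    (hm2 : ∀ n, m (2 * n) = 2 ^ r * m n) (hm21 : ∀ n, m (2 * n + 1) = 2 ^ r * m n + 1)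

include hm0 hm2 hm21

private lemma m_split : ∀ k s, s < 2 ^ k → m (2 ^ k + s) = 2 ^ (r * k) + m s := by
  intro k
  induction k with
  | zero =>
    intro s hs
    interval_cases s
    have h1 := hm21 0
    simp [hm0] at h1 ⊢
    simpa using h1
  | succ k ih =>
    intro s hs
    have hps : (2:ℕ) ^ (k + 1) = 2 * 2 ^ k := by rw [pow_succ]; ring
    have hrk : (2:ℕ) ^ (r * (k + 1)) = 2 ^ r * 2 ^ (r * k) := by
      rw [show r * (k + 1) = r + r * k by ring, pow_add]
    rcases Nat.even_or_odd s with ⟨t, ht⟩ | ⟨t, ht⟩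
    · have htlt : t < 2 ^ k := by omega
      have e : 2 ^ (k + 1) + s = 2 * (2 ^ k + t) := by omega
      have e2 : s = 2 * t := by omega
      rw [e, hm2, ih t htlt, e2, hm2, hrk]
      ring
    · have htlt : t < 2 ^ k := by omega
      have e : 2 ^ (k + 1) + s = 2 * (2 ^ k + t) + 1 := by omega
      rw [e, hm21, ih t htlt, ht, hm21, hrk]
      ring

private lemma m_pow (k : ℕ) : m (2 ^ k) = 2 ^ (r * k) := by
  have := m_split hm0 hm2 hm21 k 0 (Nat.pow_pos (by norm_num))
  simpa [hm0] using this

private lemma m_ones : ∀ k, (2 ^ r - 1) * m (2 ^ k - 1) + 1 = 2 ^ (r * k) := by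
  intro k
  induction k with
  | zero => simp [hm0]
  | succ k ih =>
    have h1 : (1:ℕ) ≤ 2 ^ k := Nat.one_le_two_pow
    have hps : (2:ℕ) ^ (k + 1) = 2 * 2 ^ k := by rw [pow_succ]; ring
    have e : 2 ^ (k + 1) - 1 = 2 * (2 ^ k - 1) + 1 := by omega
    have hrk : (2:ℕ) ^ (r * (k + 1)) = 2 ^ (r * k) * 2 ^ r := by
      rw [show r * (k + 1) = r * k + r by ring, pow_add]
    obtain ⟨F, hF⟩ := Nat.exists_eq_add_of_le (Nat.one_le_two_pow (n := r))
    rw [e, hm21, hrk, ← ih, hF]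
    have e2 : 1 + F - 1 = F := by omega
    rw [e2]
    ring

private lemma m_le_pow (hr : r ≠ 0) : ∀ n, m n ≤ n ^ r := by
  intro n
  induction n using Nat.strong_induction_on with
  | _ n ih =>
    rcases Nat.eq_zero_or_pos n with h0 | h0
    · subst h0; simp [hm0]
    · set k := Nat.log 2 n with hk
      have hk1 : 2 ^ k ≤ n := Nat.pow_log_le_self 2 (by omega)
      have hk2 : n < 2 ^ (k + 1) := Nat.lt_pow_succ_log_self (by norm_num) n
      have hps : (2:ℕ) ^ (k + 1) = 2 * 2 ^ k := by rw [pow_succ]; ring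
      set s := n - 2 ^ k with hs
      have hn : n = 2 ^ k + s := by omega
      have hslt : s < 2 ^ k := by omega
      rw [hn, m_split hm0 hm2 hm21 k s hslt]
      have hpm : (2:ℕ) ^ (r * k) = (2 ^ k) ^ r := by rw [← pow_mul, mul_comm]
      rcases Nat.eq_zero_or_pos s with hs0 | hs0
      · rw [hs0, hm0, hpm]; simp
      · have ihs : m s ≤ s ^ r := ih s (by omega)
        calc 2 ^ (r * k) + m s ≤ (2 ^ k) ^ r + s ^ r := by rw [hpm]; omega
          _ ≤ (2 ^ k + s) ^ r := pow_add_pow_le (by omega) (by omega) hr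

private lemma pow_le_m (hr : r ≠ 0) : ∀ n, 1 ≤ n → n ^ r ≤ (2 ^ r - 1) * (m n + 1) := by
  intro n
  induction n using Nat.strong_induction_on with
  | _ n ih =>
    intro h0
    have h2r : 2 ≤ 2 ^ r := by
      calc (2:ℕ) = 2 ^ 1 := by norm_num
        _ ≤ 2 ^ r := Nat.pow_le_pow_right (by norm_num) (by omega)
    set k := Nat.log 2 n with hk
    have hk1 : 2 ^ k ≤ n := Nat.pow_log_le_self 2 (by omega)
    have hk2 : n < 2 ^ (k + 1) := Nat.lt_pow_succ_log_self (by norm_num) n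
    have hps : (2:ℕ) ^ (k + 1) = 2 * 2 ^ k := by rw [pow_succ]; ring
    set s := n - 2 ^ k with hs
    have hn : n = 2 ^ k + s := by omega
    have hslt : s < 2 ^ k := by omega
    have hpm : (2:ℕ) ^ (r * k) = (2 ^ k) ^ r := by rw [← pow_mul, mul_comm]
    rw [hn, m_split hm0 hm2 hm21 k s hslt]
    rcases Nat.eq_zero_or_pos s with hs0 | hs0
    · rw [hs0, hm0]
      simp only [Nat.add_zero]
      calc (2 ^ k) ^ r ≤ 2 ^ (r * k) + 0 + 1 := by rw [hpm]; omega
        _ ≤ (2 ^ r - 1) * (2 ^ (r * k) + 0 + 1) := Nat.le_mul_of_pos_left _ (by omega)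
    · have ihs : s ^ r ≤ (2 ^ r - 1) * (m s + 1) := ih s (by omega) hs0
      calc (2 ^ k + s) ^ r ≤ (2 ^ r - 1) * (2 ^ k) ^ r + s ^ r := pow_split_le r (by omega)
        _ ≤ (2 ^ r - 1) * (2 ^ k) ^ r + (2 ^ r - 1) * (m s + 1) := by omega
        _ = (2 ^ r - 1) * (2 ^ (r * k) + m s + 1) := by rw [hpm]; ring
end mlemmas

/-- For `r ≥ 2` and `u n = m n + 1`, where `m 0 = 0`, `m (2n) = 2^r · m n`,
`m (2n+1) = 2^r · m n + 1`, one has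
`liminf u n / n^r = 1/(2^r - 1)` and `limsup u n / n^r = 1`. -/
theorem uSeq_general_liminf_limsup
    (r : ℕ) (hr : 2 ≤ r)
    (m : ℕ → ℕ) (hm0 : m 0 = 0)
    (hm2 : ∀ n, m (2 * n) = 2 ^ r * m n) (hm21 : ∀ n, m (2 * n + 1) = 2 ^ r * m n + 1)
    (u : ℕ → ℕ) (hu : ∀ n, u n = m n + 1) :
    Filter.liminf (fun n : ℕ => (u n : ℝ) / (n : ℝ) ^ r) Filter.atTop = 1 / (2 ^ r - 1) ∧
      Filter.limsup (fun n : ℕ => (u n : ℝ) / (n : ℝ) ^ r) Filter.atTop = 1 := by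
  have hr0 : r ≠ 0 := by omega
  have hupper : ∀ n : ℕ, m n ≤ n ^ r := m_le_pow hm0 hm2 hm21 hr0
  have hlower : ∀ n : ℕ, 1 ≤ n → n ^ r ≤ (2 ^ r - 1) * (m n + 1) := pow_le_m hm0 hm2 hm21 hr0
  have hmpow : ∀ k, m (2 ^ k) = 2 ^ (r * k) := m_pow hm0 hm2 hm21
  have hmones : ∀ k, (2 ^ r - 1) * m (2 ^ k - 1) + 1 = 2 ^ (r * k) := m_ones hm0 hm2 hm21
  have h2r : (2:ℝ) ≤ (2:ℝ) ^ r := by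
    calc (2:ℝ) = 2 ^ 1 := by norm_num
      _ ≤ 2 ^ r := pow_le_pow_right₀ (by norm_num) (by omega)
  have hD : (0:ℝ) < 2 ^ r - 1 := by linarith
  set D : ℝ := 2 ^ r - 1 with hDdef
  set g : ℕ → ℝ := fun n : ℕ => (u n : ℝ) / (n : ℝ) ^ r with hg
  -- basic bounds
  have hg_nonneg : ∀ n, 0 ≤ g n := fun n => div_nonneg (by positivity) (by positivity)
  have hg_le2 : ∀ n, g n ≤ 2 := by
    intro n
    rcases Nat.eq_zero_or_pos n with h0 | h0
    · subst h0; simp [hg, zero_pow hr0]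
    · have hn1 : (1:ℝ) ≤ (n:ℝ) := by exact_mod_cast h0
      have hpos : (0:ℝ) < (n:ℝ) ^ r := by positivity
      have h1r : (1:ℝ) ≤ (n:ℝ) ^ r := one_le_pow₀ hn1
      have h2 : (u n : ℝ) ≤ (n:ℝ) ^ r + 1 := by
        have h3 : u n ≤ n ^ r + 1 := by rw [hu]; have := hupper n; omega
        calc (u n : ℝ) ≤ ((n ^ r + 1 : ℕ) : ℝ) := by exact_mod_cast h3
          _ = (n:ℝ) ^ r + 1 := by push_cast; ring
      rw [hg]
      simp only
      rw [div_le_iff₀ hpos]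
      nlinarith
  have hbdd_le : IsBoundedUnder (· ≤ ·) atTop g := isBoundedUnder_of ⟨2, hg_le2⟩
  have hbdd_ge : IsBoundedUnder (· ≥ ·) atTop g := isBoundedUnder_of ⟨0, hg_nonneg⟩
  have hcb_le : IsCoboundedUnder (· ≤ ·) atTop g := hbdd_ge.isCoboundedUnder_le
  have hcb_ge : IsCoboundedUnder (· ≥ ·) atTop g := hbdd_le.isCoboundedUnder_ge
  -- limsup ≤ 1
  have limsup_le : limsup g atTop ≤ 1 := by
    apply le_of_forall_pos_le_add
    intro ε hε
    apply limsup_le_of_le hcb_le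
    obtain ⟨N, hN⟩ := exists_nat_ge (1 / ε)
    filter_upwards [eventually_ge_atTop (max N 1)] with n hn
    have hn1 : 1 ≤ n := le_trans (le_max_right _ _) hn
    have hn1' : (1:ℝ) ≤ (n:ℝ) := by exact_mod_cast hn1
    have hNn : (N:ℝ) ≤ (n:ℝ) := by exact_mod_cast le_trans (le_max_left _ _) hn
    have hnr : (n:ℝ) ≤ (n:ℝ) ^ r := le_self_pow₀ hn1' hr0
    have hpos : (0:ℝ) < (n:ℝ) ^ r := by positivity
    have h2 : (u n : ℝ) ≤ (n:ℝ) ^ r + 1 := by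
      have h3 : u n ≤ n ^ r + 1 := by rw [hu]; have := hupper n; omega
      calc (u n : ℝ) ≤ ((n ^ r + 1 : ℕ) : ℝ) := by exact_mod_cast h3
        _ = (n:ℝ) ^ r + 1 := by push_cast; ring
    have hεn : 1 ≤ ε * (n:ℝ) := by
      rw [div_le_iff₀ hε] at hN
      nlinarith
    rw [hg]
    simp only
    rw [div_le_iff₀ hpos]
    nlinarith
  -- 1 ≤ limsup
  have le_limsup : (1:ℝ) ≤ limsup g atTop := by
    apply le_limsup_of_frequently_le _ hbdd_le
    rw [frequently_atTop]
    intro N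
    refine ⟨2 ^ N, Nat.le_of_lt (Nat.lt_two_pow_self (n := N)), ?_⟩
    have hposn : (0:ℝ) < ((2 ^ N : ℕ) : ℝ) ^ r := by positivity
    have hkey : ((2 ^ N : ℕ) : ℝ) ^ r ≤ (u (2 ^ N) : ℝ) := by
      have h1 : (2 ^ N) ^ r ≤ u (2 ^ N) := by
        rw [hu, hmpow, ← pow_mul, mul_comm]
        omega
      calc ((2 ^ N : ℕ) : ℝ) ^ r = (((2 ^ N) ^ r : ℕ) : ℝ) := by push_cast; ring
        _ ≤ (u (2 ^ N) : ℝ) := by exact_mod_cast h1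
    rw [hg]
    simp only
    rw [le_div_iff₀ hposn, one_mul]
    exact hkey
  -- 1/D ≤ liminf
  have le_liminf : 1 / D ≤ liminf g atTop := by
    apply le_liminf_of_le hcb_ge
    filter_upwards [eventually_ge_atTop 1] with n hn
    have hn1' : (1:ℝ) ≤ (n:ℝ) := by exact_mod_cast hn
    have hpos : (0:ℝ) < (n:ℝ) ^ r := by positivity
    have hcast : ((n:ℝ)) ^ r ≤ D * ((u n : ℝ)) := by
      have h1 := hlower n hn
      rw [← hu] at h1
      have h2 : ((n ^ r : ℕ) : ℝ) ≤ (((2 ^ r - 1) * u n : ℕ) : ℝ) := by exact_mod_cast h1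
      have h3 : (((2 ^ r - 1) * u n : ℕ) : ℝ) = D * (u n : ℝ) := by
        rw [Nat.cast_mul, Nat.cast_sub Nat.one_le_two_pow]
        push_cast [hDdef]
        ring
      calc ((n:ℝ)) ^ r = ((n ^ r : ℕ) : ℝ) := by push_cast; ring
        _ ≤ D * (u n : ℝ) := h3 ▸ h2
    rw [hg]
    simp only
    rw [div_le_div_iff₀ hD hpos, one_mul]
    nlinarith
  -- tendsto along 2^k - 1
  have htends : Tendsto (fun k : ℕ => g (2 ^ k - 1)) atTop (𝓝 (1 / D)) := by
    have hA : Tendsto (fun k : ℕ => (2:ℝ) ^ k - 1) atTop atTop :=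
      tendsto_atTop_add_const_right _ (-1) (tendsto_pow_atTop_atTop_of_one_lt one_lt_two)
    have h1 : Tendsto (fun k : ℕ => ((2:ℝ) ^ k - 1)⁻¹) atTop (𝓝 0) := hA.inv_tendsto_atTop
    have hfrac : Tendsto (fun k : ℕ => (2:ℝ) ^ k / ((2:ℝ) ^ k - 1)) atTop (𝓝 1) := by
      apply Tendsto.congr' _ (by simpa using tendsto_const_nhds.add h1)
      filter_upwards [eventually_ge_atTop 1] with k hk
      have hk2 : (2:ℝ) ≤ (2:ℝ) ^ k := by
        calc (2:ℝ) = 2 ^ 1 := by norm_num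
          _ ≤ 2 ^ k := pow_le_pow_right₀ (by norm_num) hk
      have hne : (2:ℝ) ^ k - 1 ≠ 0 := by linarith
      field_simp
      ring
    have hpowfrac : Tendsto (fun k : ℕ => ((2:ℝ) ^ k / ((2:ℝ) ^ k - 1)) ^ r) atTop (𝓝 1) := by
      simpa using hfrac.pow r
    have hApow : Tendsto (fun k : ℕ => ((2:ℝ) ^ k - 1) ^ r) atTop atTop := by
      apply tendsto_atTop_mono' atTop _ hA
      filter_upwards [hA.eventually_ge_atTop 1] with k hk
      exact le_self_pow₀ hk hr0
    have hc : Tendsto (fun k : ℕ => ((2:ℝ) ^ r - 2) / ((2:ℝ) ^ k - 1) ^ r) atTop (𝓝 0) := by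
      simpa [div_eq_mul_inv] using hApow.inv_tendsto_atTop.const_mul ((2:ℝ) ^ r - 2)
    have hcomb : Tendsto
        (fun k : ℕ => (1 / D) * (((2:ℝ) ^ k / ((2:ℝ) ^ k - 1)) ^ r + ((2:ℝ) ^ r - 2) / ((2:ℝ) ^ k - 1) ^ r))
        atTop (𝓝 (1 / D)) := by
      have := (hpowfrac.add hc).const_mul (1 / D)
      simpa using this
    apply Tendsto.congr' _ hcomb
    filter_upwards [eventually_ge_atTop 1] with k hk
    have h1k : (1:ℕ) ≤ 2 ^ k := Nat.one_le_two_pow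
    have hk2 : (2:ℝ) ≤ (2:ℝ) ^ k := by
      calc (2:ℝ) = 2 ^ 1 := by norm_num
        _ ≤ 2 ^ k := pow_le_pow_right₀ (by norm_num) hk
    have hAne : (2:ℝ) ^ k - 1 ≠ 0 := by linarith
    have hApos : (0:ℝ) < (2:ℝ) ^ k - 1 := by linarith
    have hcast : (((2 ^ k - 1 : ℕ)) : ℝ) = (2:ℝ) ^ k - 1 := by
      rw [Nat.cast_sub h1k]; push_cast; ring
    have hcD : ((2 ^ r - 1 : ℕ) : ℝ) = D := by
      rw [hDdef, Nat.cast_sub Nat.one_le_two_pow]; push_cast; ring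
    have hM : D * ((m (2 ^ k - 1) : ℝ)) + 1 = ((2:ℝ) ^ k) ^ r := by
      have h1 := hmones k
      have h2 : (((2 ^ r - 1 : ℕ)) : ℝ) * ((m (2 ^ k - 1) : ℝ)) + 1 = ((2:ℝ)) ^ (r * k) := by
        exact_mod_cast h1
      rw [hcD] at h2
      rw [← pow_mul, mul_comm k r]
      exact h2
    have hM1 : (u (2 ^ k - 1) : ℝ) = (((2:ℝ) ^ k) ^ r + ((2:ℝ) ^ r - 2)) / D := by
      rw [hu]
      push_cast
      rw [eq_div_iff (ne_of_gt hD)]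
      rw [hDdef] at hM ⊢
      linear_combination hM
    rw [hg]
    simp only
    rw [hcast, hM1]
    field_simp
    rw [div_pow, div_mul_cancel₀ _ (pow_ne_zero _ hAne)]
  -- liminf ≤ 1/D
  have liminf_le : liminf g atTop ≤ 1 / D := by
    apply le_of_forall_pos_le_add
    intro ε hε
    apply liminf_le_of_frequently_le _ hbdd_ge
    have hev : ∀ᶠ k in atTop, g (2 ^ k - 1) ≤ 1 / D + ε := by
      have : ∀ᶠ x in 𝓝 (1 / D), x ≤ 1 / D + ε := eventually_le_nhds (by linarith)
      exact htends.eventually this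
    rw [frequently_atTop]
    intro N
    rw [eventually_atTop] at hev
    obtain ⟨K, hK⟩ := hev
    refine ⟨2 ^ (max K (N + 1)) - 1, ?_, hK _ (le_max_left _ _)⟩
    have := Nat.lt_two_pow_self (n := max K (N + 1))
    have h2 := le_max_right K (N + 1)
    omega
  constructor
  · exact le_antisymm liminf_le le_liminf
  · exact le_antisymm limsup_le le_limsup
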